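/- Let (X,x) and (Y,y) be separable pointed metric spaces with (Y,y) a metric cone, and let ε, r > 0. If ξ_{X,Y}(x, y, r/ε) < ε², then D_GH^{1/(2ε)}[(r^{-1}X, x), (Y, y)] < 4ε². -/
import Mathlib


open Metric Set Filter
open scoped ENNReal NNReal

/-- The excess of `A` over `B`: `ex(A,B) = sup_{a ∈ A} inf_{b ∈ B} d(a,b)`,
with the convention `ex(∅,B) = 0`. -/
noncomputable def exc {X : Type*} [PseudoEMetricSpace X] (A B : Set X) : ℝ≥0∞ :=
  ⨆ a ∈ A, ⨅ b ∈ B, edist a b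

/-- The relative Walkup-Wets distance in the closed ball `B(x,r)`:
`D^{x,r}[A,B] = r⁻¹ · max(ex(A ∩ B(x,r), B), ex(B ∩ B(x,r), A))`. -/
noncomputable def WW {X : Type*} [PseudoMetricSpace X] (x : X) (r : ℝ) (A B : Set X) : ℝ≥0∞ :=
  (ENNReal.ofReal r)⁻¹ *
    max (exc (A ∩ Metric.closedBall x r) B) (exc (B ∩ Metric.closedBall x r) A)

/-- `(Y,y)` is a metric cone: every point lies on a geodesic ray from `y` isometric to `[0,∞)`,
and for every `λ > 0` there is a pointed bijection of `Y` scaling all distances by `λ`. -/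
def IsMetricCone {Y : Type*} [MetricSpace Y] (y : Y) : Prop :=
  (∀ u : Y, ∃ f : ℝ≥0 → Y, Isometry f ∧ f 0 = y ∧ u ∈ Set.range f) ∧
  (∀ lam : ℝ, 0 < lam → ∃ ψ : Y → Y, Function.Bijective ψ ∧ ψ y = y ∧
    ∀ u v : Y, dist (ψ u) (ψ v) = lam * dist u v)

/-- `ξ_{X,Y}(x,y,R)`: the infimum of `ε > 0` such that there is a pointed
`εR`-Gromov-Hausdorff approximation from `(B_X(x,R),x)` to `(B_Y(y,R),y)`. -/
noncomputable def xi {X Y : Type*} [MetricSpace X] [MetricSpace Y]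
    (x : X) (y : Y) (R : ℝ) : ℝ :=
  sInf {ε : ℝ | 0 < ε ∧ ∃ φ : X → Y, φ x = y ∧
    Set.MapsTo φ (Metric.closedBall x R) (Metric.closedBall y R) ∧
    (∀ w ∈ Metric.closedBall x R, ∀ v ∈ Metric.closedBall x R,
      |dist (φ w) (φ v) - dist w v| ≤ ε * R) ∧
    (∀ u ∈ Metric.closedBall y R, Metric.infDist u (φ '' Metric.closedBall x R) ≤ ε * R)}

/-- `D_GH^R[(s·X,x),(Y,y)]`: the Gromov-Hausdorff version of the relative Walkup-Wets distance
between the `s`-rescaled space `X` and `Y`, with basepoints `x` and `y`: the infimum over all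
pseudometrics on `X ⊕ Y` restricting to `s · d_X` on `X` and to `d_Y` on `Y` and identifying
the basepoints, of the relative Walkup-Wets distance of the two copies in the ball of radius
`R` around the common basepoint. -/
noncomputable def DGHs {X Y : Type*} [MetricSpace X] [MetricSpace Y]
    (s : ℝ) (x : X) (y : Y) (R : ℝ) : ℝ≥0∞ :=
  ⨅ (m : PseudoMetricSpace (X ⊕ Y)),
    letI := m
    ⨅ (_ : ∀ u v : X, dist (Sum.inl u : X ⊕ Y) (Sum.inl v) = s * dist u v)
      (_ : ∀ u v : Y, dist (Sum.inr u : X ⊕ Y) (Sum.inr v) = dist u v)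
      (_ : dist (Sum.inl x : X ⊕ Y) (Sum.inr y) = 0),
      WW (Sum.inl x : X ⊕ Y) R (Set.range Sum.inl) (Set.range Sum.inr)

open Sum in
private lemma glue_exists {X Y : Type*} [MetricSpace X] [MetricSpace Y] (x : X) (y : Y)
    (s : ℝ) (hs : 0 < s) (S : Set X) (hxS : x ∈ S) (φ : X → Y) (hφx : φ x = y)
    (δ : ℝ) (hδ : 0 ≤ δ)
    (hdist : ∀ w ∈ S, ∀ w' ∈ S, |dist (φ w) (φ w') - s * dist w w'| ≤ δ) :
    ∃ m : PseudoMetricSpace (X ⊕ Y),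
      (∀ u v : X, m.dist (inl u) (inl v) = s * dist u v) ∧
      (∀ u v : Y, m.dist (inr u) (inr v) = dist u v) ∧
      (∀ v : Y, m.dist (inl x) (inr v) = dist y v) ∧
      (∀ w ∈ S, ∀ v : Y, m.dist (inl w) (inr v) ≤ δ + dist (φ w) v) := by
  classical
  set A : X → Y → Set ℝ := fun u v => (fun w => s * dist u w + δ + dist (φ w) v) '' S with hA
  have hAne : ∀ u v, (A u v).Nonempty := fun u v => ⟨_, ⟨x, hxS, rfl⟩⟩
  have hAbdd : ∀ u v, BddBelow (A u v) := by
    intro u v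
    refine ⟨0, ?_⟩
    rintro t ⟨w, hw, rfl⟩
    dsimp only
    have h1 : 0 ≤ s * dist u w := mul_nonneg hs.le dist_nonneg
    have h2 : (0:ℝ) ≤ dist (φ w) v := dist_nonneg
    linarith
  set D : X → Y → ℝ := fun u v => min (sInf (A u v)) (s * dist u x + dist y v) with hD
  have hsInf_ge : ∀ u v c, (∀ w ∈ S, c ≤ s * dist u w + δ + dist (φ w) v) →
      c ≤ sInf (A u v) := by
    intro u v c hc
    refine le_csInf (hAne u v) ?_
    rintro t ⟨w, hw, rfl⟩
    exact hc w hw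
  have hDle : ∀ u v, ∀ w ∈ S, D u v ≤ s * dist u w + δ + dist (φ w) v := by
    intro u v w hw
    exact (min_le_left _ _).trans (csInf_le (hAbdd u v) ⟨w, hw, rfl⟩)
  have hDle2 : ∀ u v, D u v ≤ s * dist u x + dist y v := fun u v => min_le_right _ _
  have hub : ∀ w ∈ S, ∀ w' ∈ S, dist (φ w) (φ w') ≤ s * dist w w' + δ := by
    intro w hw w' hw'
    have := abs_le.1 (hdist w hw w' hw')
    linarith [this.2]
  have hlb : ∀ w ∈ S, ∀ w' ∈ S, s * dist w w' ≤ dist (φ w) (φ w') + δ := by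
    intro w hw w' hw'
    have := abs_le.1 (hdist w hw w' hw')
    linarith [this.1]
  -- T1
  have T1 : ∀ u u' v, D u v ≤ s * dist u u' + D u' v := by
    intro u u' v
    conv_rhs => rw [hD]
    dsimp only
    rw [← min_add_add_left]
    refine le_min ?_ ?_
    · rw [← sub_le_iff_le_add']
      refine hsInf_ge u' v _ ?_
      intro w hw
      rw [sub_le_iff_le_add']
      have h1 := hDle u v w hw
      have h2 : dist u w ≤ dist u u' + dist u' w := dist_triangle u u' w
      have h3 : s * dist u w ≤ s * (dist u u' + dist u' w) :=
        mul_le_mul_of_nonneg_left h2 hs.le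
      nlinarith
    · have h2 : dist u x ≤ dist u u' + dist u' x := dist_triangle u u' x
      have h3 : s * dist u x ≤ s * (dist u u' + dist u' x) :=
        mul_le_mul_of_nonneg_left h2 hs.le
      have := hDle2 u v
      nlinarith
  -- T2
  have T2 : ∀ u v v', D u v ≤ D u v' + dist v' v := by
    intro u v v'
    conv_rhs => rw [hD]
    dsimp only
    rw [← min_add_add_right]
    refine le_min ?_ ?_
    · rw [← sub_le_iff_le_add]
      refine hsInf_ge u v' _ ?_
      intro w hw
      rw [sub_le_iff_le_add]
      have h1 := hDle u v w hw
      have h2 : dist (φ w) v ≤ dist (φ w) v' + dist v' v := dist_triangle _ _ _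
      linarith
    · have h1 := hDle2 u v
      have h2 : dist y v ≤ dist y v' + dist v' v := dist_triangle _ _ _
      linarith
  -- T3
  have T3 : ∀ u u' v, s * dist u u' ≤ D u v + D u' v := by
    intro u u' v
    rw [hD]
    dsimp only
    rcases min_cases (sInf (A u v)) (s * dist u x + dist y v) with ⟨hm, _⟩ | ⟨hm, _⟩ <;>
    rcases min_cases (sInf (A u' v)) (s * dist u' x + dist y v) with ⟨hm', _⟩ | ⟨hm', _⟩ <;>
      rw [hm, hm']
    · rw [← sub_le_iff_le_add]
      refine hsInf_ge u v _ ?_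
      intro w hw
      rw [sub_le_comm]
      refine hsInf_ge u' v _ ?_
      intro w' hw'
      rw [sub_le_iff_le_add]
      have h1 : dist u u' ≤ dist u w + (dist w w' + dist w' u') :=
        (dist_triangle u w u').trans (by gcongr; exact dist_triangle w w' u')
      have h2 : s * dist u u' ≤ s * (dist u w + (dist w w' + dist w' u')) :=
        mul_le_mul_of_nonneg_left h1 hs.le
      have h3 := hlb w hw w' hw'
      have h4 : dist (φ w) (φ w') ≤ dist (φ w) v + dist (φ w') v := by
        rw [dist_comm (φ w') v]; exact dist_triangle _ _ _
      have h5 : dist w' u' = dist u' w' := dist_comm _ _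
      nlinarith
    · rw [← sub_le_iff_le_add]
      refine hsInf_ge u v _ ?_
      intro w hw
      rw [sub_le_iff_le_add]
      have h1 : dist u u' ≤ dist u w + (dist w x + dist x u') :=
        (dist_triangle u w u').trans (by gcongr; exact dist_triangle w x u')
      have h2 : s * dist u u' ≤ s * (dist u w + (dist w x + dist x u')) :=
        mul_le_mul_of_nonneg_left h1 hs.le
      have h3 := hlb w hw x hxS
      rw [hφx] at h3
      have h4 : dist (φ w) y ≤ dist (φ w) v + dist y v := by
        rw [dist_comm y v]; exact dist_triangle _ _ _
      have h5 : dist x u' = dist u' x := dist_comm _ _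
      nlinarith
    · rw [← sub_le_iff_le_add']
      refine hsInf_ge u' v _ ?_
      intro w hw
      rw [sub_le_iff_le_add']
      have h1 : dist u u' ≤ dist u x + (dist x w + dist w u') :=
        (dist_triangle u x u').trans (by gcongr; exact dist_triangle x w u')
      have h2 : s * dist u u' ≤ s * (dist u x + (dist x w + dist w u')) :=
        mul_le_mul_of_nonneg_left h1 hs.le
      have h3 := hlb x hxS w hw
      rw [hφx] at h3
      have h4 : dist y (φ w) ≤ dist y v + dist (φ w) v := by
        rw [dist_comm (φ w) v]; exact dist_triangle _ _ _
      have h5 : dist x w = dist w x := dist_comm _ _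
      have h6 : dist w u' = dist u' w := dist_comm _ _
      nlinarith
    · have h1 : dist u u' ≤ dist u x + dist x u' := dist_triangle _ _ _
      have h2 : s * dist u u' ≤ s * (dist u x + dist x u') :=
        mul_le_mul_of_nonneg_left h1 hs.le
      have h5 : dist x u' = dist u' x := dist_comm _ _
      have h7 : (0:ℝ) ≤ dist y v := dist_nonneg
      nlinarith
  -- T4
  have T4 : ∀ u v v', dist v v' ≤ D u v + D u v' := by
    intro u v v'
    rw [hD]
    dsimp only
    rcases min_cases (sInf (A u v)) (s * dist u x + dist y v) with ⟨hm, _⟩ | ⟨hm, _⟩ <;>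
    rcases min_cases (sInf (A u v')) (s * dist u x + dist y v') with ⟨hm', _⟩ | ⟨hm', _⟩ <;>
      rw [hm, hm']
    · rw [← sub_le_iff_le_add]
      refine hsInf_ge u v _ ?_
      intro w hw
      rw [sub_le_comm]
      refine hsInf_ge u v' _ ?_
      intro w' hw'
      rw [sub_le_iff_le_add]
      have h1 : dist v v' ≤ dist v (φ w) + (dist (φ w) (φ w') + dist (φ w') v') :=
        (dist_triangle v (φ w) v').trans (by gcongr; exact dist_triangle _ _ _)
      have h2 := hub w hw w' hw'
      have h3 : dist w w' ≤ dist w u + dist u w' := dist_triangle _ _ _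
      have h4 : s * dist w w' ≤ s * (dist w u + dist u w') :=
        mul_le_mul_of_nonneg_left h3 hs.le
      have h5 : dist w u = dist u w := dist_comm _ _
      have h6 : dist v (φ w) = dist (φ w) v := dist_comm _ _
      nlinarith
    · rw [← sub_le_iff_le_add]
      refine hsInf_ge u v _ ?_
      intro w hw
      rw [sub_le_iff_le_add]
      have h1 : dist v v' ≤ dist v (φ w) + (dist (φ w) y + dist y v') :=
        (dist_triangle v (φ w) v').trans (by gcongr; exact dist_triangle _ _ _)
      have h2 := hub w hw x hxS
      rw [hφx] at h2
      have h3 : dist w x ≤ dist w u + dist u x := dist_triangle _ _ _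
      have h4 : s * dist w x ≤ s * (dist w u + dist u x) :=
        mul_le_mul_of_nonneg_left h3 hs.le
      have h5 : dist w u = dist u w := dist_comm _ _
      have h6 : dist v (φ w) = dist (φ w) v := dist_comm _ _
      nlinarith
    · rw [← sub_le_iff_le_add']
      refine hsInf_ge u v' _ ?_
      intro w hw
      rw [sub_le_iff_le_add']
      have h1 : dist v v' ≤ dist v y + (dist y (φ w) + dist (φ w) v') :=
        (dist_triangle v y v').trans (by gcongr; exact dist_triangle _ _ _)
      have h2 := hub x hxS w hw
      rw [hφx] at h2
      have h3 : dist x w ≤ dist x u + dist u w := dist_triangle _ _ _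
      have h4 : s * dist x w ≤ s * (dist x u + dist u w) :=
        mul_le_mul_of_nonneg_left h3 hs.le
      have h5 : dist x u = dist u x := dist_comm _ _
      have h6 : dist v y = dist y v := dist_comm _ _
      nlinarith
    · have h1 : dist v v' ≤ dist v y + dist y v' := dist_triangle _ _ _
      have h6 : dist v y = dist y v := dist_comm _ _
      have h7 : (0:ℝ) ≤ s * dist u x := mul_nonneg hs.le dist_nonneg
      nlinarith
  -- D x v = dist y v
  have Dxv : ∀ v, D x v = dist y v := by
    intro v
    refine le_antisymm ?_ ?_
    · have := hDle2 x v
      simpa using this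
    · refine le_min ?_ ?_
      · refine hsInf_ge x v _ ?_
        intro w hw
        have h1 : dist y v ≤ dist y (φ w) + dist (φ w) v := dist_triangle _ _ _
        have h2 := hub x hxS w hw
        rw [hφx] at h2
        linarith
      · simp
  -- D w v ≤ δ + dist (φ w) v
  have Dwv : ∀ w ∈ S, ∀ v, D w v ≤ δ + dist (φ w) v := by
    intro w hw v
    have := hDle w v w hw
    simpa using this
  -- assemble
  let dd : X ⊕ Y → X ⊕ Y → ℝ := fun a b =>
    match a, b with
    | inl u, inl v => s * dist u v
    | inl u, inr v => D u v
    | inr v, inl u => D u v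
    | inr u, inr v => dist u v
  have dd_self : ∀ a, dd a a = 0 := by
    rintro (u | u) <;> simp [dd]
  have dd_comm : ∀ a b, dd a b = dd b a := by
    rintro (u | u) (v | v) <;> simp [dd, dist_comm]
  have dd_tri : ∀ a b c, dd a c ≤ dd a b + dd b c := by
    rintro (a | a) (b | b) (c | c) <;> simp only [dd]
    · rw [← mul_add]
      exact mul_le_mul_of_nonneg_left (dist_triangle _ _ _) hs.le
    · exact T1 a b c
    · exact T3 a c b
    · exact T2 a c b
    · have := T1 c b a
      rw [dist_comm c b] at this
      linarith
    · exact T4 b a c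
    · have := T2 c a b
      rw [dist_comm b a] at this
      linarith
    · exact dist_triangle _ _ _
  refine ⟨{ toDist := ⟨dd⟩, dist_self := dd_self, dist_comm := dd_comm,
            dist_triangle := dd_tri }, ?_, ?_, ?_, ?_⟩
  · intro u v; rfl
  · intro u v; rfl
  · intro v; exact Dxv v
  · intro w hw v; exact Dwv w hw v

/-- If `(Y,y)` is a metric cone and `ξ_{X,Y}(x,y,r/ε) < ε²`,
then `D_GH^{1/(2ε)}[(r⁻¹X,x),(Y,y)] < 4ε²`. -/
theorem stmt13 {X Y : Type*} [MetricSpace X] [MetricSpace Y]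
    [TopologicalSpace.SeparableSpace X] [TopologicalSpace.SeparableSpace Y]
    (x : X) (y : Y) (hcone : IsMetricCone y) (ε r : ℝ) (hε : 0 < ε) (hr : 0 < r)
    (h : xi x y (r / ε) < ε ^ 2) :
    DGHs r⁻¹ x y (1 / (2 * ε)) < ENNReal.ofReal (4 * ε ^ 2) := by
  have hR : 0 < r / ε := div_pos hr hε
  set R : ℝ := r / ε with hRdef
  set T : Set ℝ := {e : ℝ | 0 < e ∧ ∃ φ : X → Y, φ x = y ∧
    Set.MapsTo φ (Metric.closedBall x R) (Metric.closedBall y R) ∧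
    (∀ w ∈ Metric.closedBall x R, ∀ v ∈ Metric.closedBall x R,
      |dist (φ w) (φ v) - dist w v| ≤ e * R) ∧
    (∀ u ∈ Metric.closedBall y R, Metric.infDist u (φ '' Metric.closedBall x R) ≤ e * R)}
    with hT
  have hTne : T.Nonempty := by
    refine ⟨2, two_pos, fun _ => y, rfl, ?_, ?_, ?_⟩
    · intro w _; exact mem_closedBall_self hR.le
    · intro w hw v hv
      have h1 : dist w v ≤ dist w x + dist x v := dist_triangle _ _ _
      have h2 : dist w x ≤ R := mem_closedBall.1 hw
      have h3 : dist x v ≤ R := by rw [dist_comm]; exact mem_closedBall.1 hv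
      rw [dist_self]
      rw [abs_sub_comm, abs_of_nonneg (by simp [dist_nonneg])]
      simp only [sub_zero]
      linarith
    · intro u hu
      have hy : y ∈ (fun _ : X => y) '' Metric.closedBall x R :=
        ⟨x, mem_closedBall_self hR.le, rfl⟩
      have h1 : Metric.infDist u ((fun _ : X => y) '' Metric.closedBall x R) ≤ dist u y :=
        Metric.infDist_le_dist_of_mem hy
      have h2 : dist u y ≤ R := mem_closedBall.1 hu
      linarith
  have hTbdd : BddBelow T := ⟨0, fun t ht => ht.1.le⟩
  have : sInf T < ε ^ 2 := h
  obtain ⟨e, heT, helt⟩ := (csInf_lt_iff hTbdd hTne).1 this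
  obtain ⟨hepos, φ, hφx, hφmaps, hφdist, hφdense⟩ := heT
  obtain ⟨ψ, hψbij, hψy, hψd⟩ := hcone.2 r⁻¹ (inv_pos.2 hr)
  set δ : ℝ := e / ε with hδdef
  have hδpos : 0 < δ := div_pos hepos hε
  have hδε : δ < ε := by
    rw [hδdef, div_lt_iff₀ hε]
    nlinarith [sq_nonneg ε]
  set S : Set X := Metric.closedBall x R with hS
  have hxS : x ∈ S := mem_closedBall_self hR.le
  set φ' : X → Y := ψ ∘ φ with hφ'
  have hφ'x : φ' x = y := by rw [hφ', Function.comp_apply, hφx, hψy]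
  have hdist' : ∀ w ∈ S, ∀ w' ∈ S, |dist (φ' w) (φ' w') - r⁻¹ * dist w w'| ≤ δ := by
    intro w hw w' hw'
    rw [hφ', Function.comp_apply, Function.comp_apply, hψd]
    rw [← mul_sub, abs_mul, abs_of_pos (inv_pos.2 hr)]
    have h1 := hφdist w hw w' hw'
    have h2 : r⁻¹ * |dist (φ w) (φ w') - dist w w'| ≤ r⁻¹ * (e * R) :=
      mul_le_mul_of_nonneg_left h1 (inv_pos.2 hr).le
    have h3 : r⁻¹ * (e * R) = δ := by
      rw [hRdef, hδdef]; field_simp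
    linarith
  obtain ⟨m, hm1, hm2, hm3, hm4⟩ :=
    glue_exists x y r⁻¹ (inv_pos.2 hr) S hxS φ' hφ'x δ hδpos.le hdist'
  letI := m
  have hmd : ∀ a b : X ⊕ Y, dist a b = m.dist a b := fun a b => rfl
  -- step 1 : DGHs ≤ WW for this metric
  have hstep : DGHs r⁻¹ x y (1 / (2 * ε)) ≤
      WW (Sum.inl x : X ⊕ Y) (1 / (2 * ε)) (Set.range Sum.inl) (Set.range Sum.inr) := by
    refine iInf_le_of_le m ?_
    have h3 : dist (Sum.inl x : X ⊕ Y) (Sum.inr y) = 0 := by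
      rw [hmd, hm3, dist_self]
    exact iInf_le_of_le hm1 (iInf_le_of_le hm2 (iInf_le_of_le h3 le_rfl))
  -- bound the two excesses
  have hb1 : exc (Set.range (Sum.inl : X → X ⊕ Y) ∩ Metric.closedBall (Sum.inl x) (1 / (2 * ε)))
      (Set.range Sum.inr) ≤ ENNReal.ofReal (δ + ε) := by
    rw [exc]
    refine iSup₂_le ?_
    rintro a ⟨⟨u, rfl⟩, hball⟩
    have hdux : dist u x ≤ r / (2 * ε) := by
      have h1 : dist (Sum.inl u : X ⊕ Y) (Sum.inl x) ≤ 1 / (2 * ε) := mem_closedBall.1 hball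
      rw [hmd, hm1] at h1
      have h2 : r⁻¹ * dist u x ≤ 1 / (2 * ε) := h1
      calc dist u x = r * (r⁻¹ * dist u x) := by field_simp
        _ ≤ r * (1 / (2 * ε)) := mul_le_mul_of_nonneg_left h2 hr.le
        _ = r / (2 * ε) := by ring
    have huS : u ∈ S := by
      rw [hS]
      refine mem_closedBall.2 (hdux.trans ?_)
      rw [hRdef, div_le_div_iff₀ (by positivity) hε]
      nlinarith
    refine le_trans (iInf₂_le (Sum.inr (φ' u)) (mem_range_self _)) ?_
    rw [edist_dist, hmd]
    refine ENNReal.ofReal_le_ofReal ?_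
    have := hm4 u huS (φ' u)
    rw [dist_self] at this
    linarith
  have hb2 : exc (Set.range (Sum.inr : Y → X ⊕ Y) ∩ Metric.closedBall (Sum.inl x) (1 / (2 * ε)))
      (Set.range Sum.inl) ≤ ENNReal.ofReal (δ + ε) := by
    rw [exc]
    refine iSup₂_le ?_
    rintro a ⟨⟨v, rfl⟩, hball⟩
    have hdyv : dist y v ≤ 1 / (2 * ε) := by
      have h1 : dist (Sum.inr v : X ⊕ Y) (Sum.inl x) ≤ 1 / (2 * ε) := mem_closedBall.1 hball
      rw [dist_comm, hmd, hm3] at h1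
      exact h1
    obtain ⟨a', ha'⟩ := hψbij.2 v
    have hda' : dist a' y ≤ R := by
      have h1 : dist v y = r⁻¹ * dist a' y := by
        calc dist v y = dist (ψ a') (ψ y) := by rw [ha', hψy]
          _ = r⁻¹ * dist a' y := hψd _ _
      have h2 : dist a' y = r * dist v y := by
        rw [h1]; field_simp
      rw [h2, hRdef]
      rw [dist_comm] at hdyv
      have h2e : (0:ℝ) < 2 * ε := by positivity
      have h3 : r * dist v y ≤ r * (1 / (2 * ε)) := mul_le_mul_of_nonneg_left hdyv hr.le
      have h4 : r / ε - r * (1 / (2 * ε)) = r / (2 * ε) := by field_simp; ring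
      have h5 : (0:ℝ) ≤ r / (2 * ε) := by positivity
      linarith
    have hdense := hφdense a' (mem_closedBall.2 hda')
    have hlt : Metric.infDist a' (φ '' Metric.closedBall x R) < e * R + r * (ε - δ) := by
      have : 0 < r * (ε - δ) := by nlinarith
      linarith
    have hne : (φ '' Metric.closedBall x R).Nonempty := ⟨φ x, mem_image_of_mem φ hxS⟩
    obtain ⟨z, ⟨w, hw, rfl⟩, hz⟩ := (Metric.infDist_lt_iff hne).1 hlt
    have hvw : dist (φ' w) v < ε := by
      have h1 : dist v (φ' w) = r⁻¹ * dist a' (φ w) := by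
        rw [hφ', Function.comp_apply, ← ha', hψd]
      have h2 : r⁻¹ * dist a' (φ w) < r⁻¹ * (e * R + r * (ε - δ)) :=
        (mul_lt_mul_iff_right₀ (inv_pos.2 hr)).2 hz
      have h3 : r⁻¹ * (e * R + r * (ε - δ)) = ε := by
        rw [hRdef, hδdef]; field_simp; ring
      rw [dist_comm] at h1
      linarith [h1 ▸ h2.trans_le h3.le]
    refine le_trans (iInf₂_le (Sum.inl w) (mem_range_self _)) ?_
    rw [edist_dist, dist_comm, hmd]
    refine ENNReal.ofReal_le_ofReal ?_
    have := hm4 w hw v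
    linarith
  -- combine
  have hcoef : (ENNReal.ofReal (1 / (2 * ε)))⁻¹ = ENNReal.ofReal (2 * ε) := by
    rw [one_div, ENNReal.ofReal_inv_of_pos (by positivity), inv_inv]
  have hWW : WW (Sum.inl x : X ⊕ Y) (1 / (2 * ε)) (Set.range Sum.inl) (Set.range Sum.inr)
      ≤ ENNReal.ofReal (2 * ε * (δ + ε)) := by
    rw [WW, hcoef, ENNReal.ofReal_mul (by positivity : (0:ℝ) ≤ 2 * ε)]
    exact mul_le_mul_right (max_le hb1 hb2) _
  refine lt_of_le_of_lt (hstep.trans hWW) ?_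
  rw [ENNReal.ofReal_lt_ofReal_iff (by positivity)]
  have : ε * δ = e := by rw [hδdef]; field_simp
  nlinarith
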